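/- Second-moment ODE from the transform PDE: under the stated hypotheses, the map z_2(t) := ∇²_θ Ξ(0, t) ∈ ℝ^{dL²} satisfies z_2'(t) = (Λ ⊗ I_{L²}) ∇²B(0) π(t) + ( (Q^T ⊗ I_{L²}) − ( (K_{d,L} ⊗ I_L) K_{L,dL} + I_{dL²} ) (R^T ⊗ I_L) ) z_2(t) + ( ( (Λ ⊗ I_L) ∇B(0) ) ⊗ I_L ) z_1(t) + (K_{d,L} ⊗ I_L) K_{L,dL} ( ( (Λ ⊗ I_L) ∇B(0) ) ⊗ I_L ) z_1(t), where z_1(t) := ∇_θ Ξ(0, t), π(t) := Ξ(0, t), and K_{m,n} := Σ_{i=1}^m Σ_{j=1}^n ( H_{ij} ⊗ H_{ij}^T ) is the commutation matrix, H_{ij} ∈ ℝ^{m×n} having a 1 in position (i,j) and zeros elsewhere. -/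

import Mathlib

open Matrix
open scoped Kronecker

noncomputable section

/-- The stacked-gradient operator on matrix-valued maps: for `f : ℝ^L → ℝ^{n₁×n₂}`, `∇f` is the
`(n₁ × L) × n₂` matrix whose row `(i, k)` and column `j` entry is `∂f_{ij}/∂θ_k`. -/
def mgrad {L : ℕ} {n₁ n₂ : Type*} (f : (Fin L → ℝ) → Matrix n₁ n₂ ℝ)
    (θ : Fin L → ℝ) : Matrix (n₁ × Fin L) n₂ ℝ :=
  Matrix.of fun ik j => fderiv ℝ (fun x => f x ik.1 j) θ (Pi.single ik.2 1)

/-- The matrix `I_d ⊗ θᵀ : ℝ^{d × dL}`. -/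
def idKronRowVec (d : ℕ) {L : ℕ} (θ : Fin L → ℝ) : Matrix (Fin d) (Fin d × Fin L) ℝ :=
  Matrix.of fun j p => if j = p.1 then θ p.2 else 0

/-- The commutation matrix `K_{m,n} = ∑_i ∑_j H_{ij} ⊗ H_{ij}ᵀ`. -/
def commMat (m n : Type*) [Fintype m] [Fintype n] [DecidableEq m] [DecidableEq n] :
    Matrix (m × n) (n × m) ℝ :=
  ∑ i : m, ∑ j : n,
    (Matrix.single i j (1 : ℝ)) ⊗ₖ (Matrix.single i j (1 : ℝ))ᵀ

section helpers
variable {E : Type*} [NormedAddCommGroup E] [NormedSpace ℝ E]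

/-- Directional derivative operator. -/
def dirD (a : E) (f : E → ℝ) : E → ℝ := fun p => fderiv ℝ f p a

lemma contDiff_dirD {n : ℕ} (a : E) {f : E → ℝ} (hf : ContDiff ℝ (n + 1) f) :
    ContDiff ℝ n (dirD a f) := by
  have h : dirD a f = (fun φ : E →L[ℝ] ℝ => φ a) ∘ fderiv ℝ f := rfl
  rw [h]
  exact (ContinuousLinearMap.apply ℝ ℝ a).contDiff.comp
    (hf.fderiv_right (by exact_mod_cast le_refl _))

lemma fderiv_dirD {f : E → ℝ} (hf : ContDiff ℝ 2 f) (a b : E) (p : E) :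
    fderiv ℝ (dirD a f) p b = fderiv ℝ (fderiv ℝ f) p b a := by
  have hd : DifferentiableAt ℝ (fderiv ℝ f) p :=
    (hf.fderiv_right (m := 1) (by norm_num)).differentiable (by norm_num) p
  have hc : HasFDerivAt (dirD a f)
      ((ContinuousLinearMap.apply ℝ ℝ a).comp (fderiv ℝ (fderiv ℝ f) p)) p :=
    ((ContinuousLinearMap.apply ℝ ℝ a).hasFDerivAt).comp p hd.hasFDerivAt
  rw [hc.fderiv]
  rfl

lemma dirD_comm {f : E → ℝ} (hf : ContDiff ℝ 2 f) (a b : E) :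
    dirD a (dirD b f) = dirD b (dirD a f) := by
  funext p
  have hd : HasFDerivAt (fderiv ℝ f) (fderiv ℝ (fderiv ℝ f) p) p :=
    (((hf.fderiv_right (m := 1) (by norm_num)).differentiable (by norm_num)) p).hasFDerivAt
  have hsym := second_derivative_symmetric
    (fun y => ((hf.differentiable (by norm_num)) y).hasFDerivAt) hd a b
  show fderiv ℝ (dirD b f) p a = fderiv ℝ (dirD a f) p b
  rw [fderiv_dirD hf b a p, fderiv_dirD hf a b p, hsym]

variable {f g : E → ℝ} {p : E} (a : E)

lemma dirD_add (hf : DifferentiableAt ℝ f p) (hg : DifferentiableAt ℝ g p) :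
    dirD a (fun x => f x + g x) p = dirD a f p + dirD a g p := by
  simp [dirD, fderiv_fun_add hf hg]

lemma dirD_sub (hf : DifferentiableAt ℝ f p) (hg : DifferentiableAt ℝ g p) :
    dirD a (fun x => f x - g x) p = dirD a f p - dirD a g p := by
  simp [dirD, fderiv_fun_sub hf hg]

lemma dirD_sub_const (c : ℝ) :
    dirD a (fun x => f x - c) p = dirD a f p := by
  simp [dirD, fderiv_sub_const]

lemma dirD_const_mul (hg : DifferentiableAt ℝ g p) (c : ℝ) :
    dirD a (fun x => c * g x) p = c * dirD a g p := by
  simp [dirD, fderiv_const_mul hg]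

lemma dirD_mul (hf : DifferentiableAt ℝ f p) (hg : DifferentiableAt ℝ g p) :
    dirD a (fun x => f x * g x) p = dirD a f p * g p + f p * dirD a g p := by
  simp [dirD, fderiv_fun_mul hf hg]; ring

lemma dirD_sum {ι : Type*} {u : Finset ι} {F : ι → E → ℝ}
    (h : ∀ i ∈ u, DifferentiableAt ℝ (F i) p) :
    dirD a (fun x => ∑ i ∈ u, F i x) p = ∑ i ∈ u, dirD a (F i) p := by
  simp [dirD, fderiv_fun_sum h]

end helpers

lemma dirD_coord {L : ℕ} (a : (Fin L → ℝ) × ℝ) (m : Fin L) (q : (Fin L → ℝ) × ℝ) :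
    dirD a (fun p : (Fin L → ℝ) × ℝ => p.1 m) q = a.1 m := by
  have h : (fun p : (Fin L → ℝ) × ℝ => p.1 m) =
      ⇑((ContinuousLinearMap.proj (R := ℝ) (φ := fun _ : Fin L => ℝ) m).comp
        (ContinuousLinearMap.fst ℝ (Fin L → ℝ) ℝ)) := rfl
  rw [dirD, h, ContinuousLinearMap.fderiv]
  rfl

section prodl
variable {EL : Type*} [NormedAddCommGroup EL] [NormedSpace ℝ EL]

/-- Partial θ-derivative of a section equals a joint directional derivative. -/
lemma sect_fderiv {f : EL × ℝ → ℝ} {s : ℝ} {θ : EL} (hf : DifferentiableAt ℝ f (θ, s)) (v : EL) :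
    fderiv ℝ (fun x => f (x, s)) θ v = dirD (v, 0) f (θ, s) := by
  have h : HasFDerivAt (fun x : EL => (x, s))
      ((ContinuousLinearMap.id ℝ EL).prod 0) θ :=
    (hasFDerivAt_id θ).prodMk (hasFDerivAt_const s θ)
  have hc : HasFDerivAt (fun x => f (x, s))
      ((fderiv ℝ f (θ, s)).comp ((ContinuousLinearMap.id ℝ EL).prod 0)) θ :=
    (hf.hasFDerivAt.comp θ h : HasFDerivAt (f ∘ fun x => (x, s)) _ θ)
  rw [hc.fderiv]
  show fderiv ℝ f (θ, s) (((ContinuousLinearMap.id ℝ EL).prod 0) v) = _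
  simp [dirD]

lemma time_hasDerivAt {f : EL × ℝ → ℝ} {θ : EL} {s : ℝ} (hf : DifferentiableAt ℝ f (θ, s)) :
    HasDerivAt (fun t => f (θ, t)) (dirD (0, 1) f (θ, s)) s := by
  have h : HasDerivAt (fun t : ℝ => ((θ : EL), t)) ((0 : EL), (1 : ℝ)) s := by
    simpa using (hasDerivAt_const s θ).prodMk (hasDerivAt_id s)
  exact hf.hasFDerivAt.comp_hasDerivAt s h

end prodl

lemma commMat_apply {m n : Type*} [Fintype m] [Fintype n] [DecidableEq m] [DecidableEq n]
    (a e : m) (b c : n) :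
    commMat m n (a, b) (c, e) = if a = e ∧ b = c then 1 else 0 := by
  simp only [commMat, Matrix.sum_apply, Matrix.kroneckerMap_apply, Matrix.transpose_apply,
    Matrix.single, Matrix.of_apply]
  simp only [ite_and, mul_ite, mul_one, mul_zero, ite_mul, one_mul, zero_mul]
  rw [Finset.sum_eq_single a (fun x _ hx => by simp [hx]) (by simp)]
  rw [Finset.sum_eq_single b (fun y _ hy => by simp [hy]) (by simp)]
  by_cases h1 : a = e <;> by_cases h2 : b = c <;> subst_vars <;> simp [eq_comm]

lemma kron1_mulVec {L : ℕ} {α γ : Type*} [Fintype α] [Fintype γ]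
    (M : Matrix α γ ℝ) (y : γ × Fin L → ℝ) (r : α) (l : Fin L) :
    ((M ⊗ₖ (1 : Matrix (Fin L) (Fin L) ℝ)) *ᵥ y) (r, l) = ∑ c : γ, M r c * y (c, l) := by
  simp only [Matrix.mulVec, dotProduct, Matrix.kroneckerMap_apply, Matrix.one_apply]
  rw [Fintype.sum_prod_type]
  refine Finset.sum_congr rfl fun c _ => ?_
  rw [Finset.sum_eq_single l (fun ll _ hll => by simp [Ne.symm hll]) (by simp)]
  simp

lemma KK_apply {d L : ℕ} (j p₁ : Fin d) (k l p₂ q : Fin L) :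
    ((commMat (Fin d) (Fin L) ⊗ₖ (1 : Matrix (Fin L) (Fin L) ℝ))
      * (Matrix.reindex (Equiv.prodAssoc (Fin L) (Fin d) (Fin L)).symm (Equiv.refl _)
          (commMat (Fin L) (Fin d × Fin L)))) ((j, k), l) ((p₁, p₂), q)
      = if j = p₁ ∧ l = p₂ ∧ k = q then 1 else 0 := by
  simp only [Matrix.mul_apply, Matrix.kroneckerMap_apply, Matrix.reindex_apply,
    Matrix.submatrix_apply, Equiv.symm_symm, Equiv.refl_symm, Equiv.refl_apply,
    Equiv.prodAssoc_apply, commMat_apply, Matrix.one_apply]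
  rw [Finset.sum_eq_single ((q, p₁), p₂) (fun x _ hx => by
    obtain ⟨⟨a, b⟩, c⟩ := x
    have hne : ¬(a = q ∧ (b, c) = (p₁, p₂)) := by
      simpa [Prod.ext_iff, and_assoc] using hx
    simp only [Prod.ext_iff, not_and] at hne
    simp [commMat_apply, Prod.ext_iff]
    intros; exfalso; tauto) (by simp)]
  by_cases h1 : j = p₁ <;> by_cases h2 : l = p₂ <;> by_cases h3 : k = q <;>
    simp [commMat_apply, h1, h2, h3]

/-- **Second-moment ODE from the transform PDE.** Suppose `Ξ : ℝ^L × [0,∞) → ℝ^d` is `C³` and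
satisfies `∂_t Ξ(θ,t) = Λ(B(θ) - I_d)Ξ(θ,t) + Qᵀ Ξ(θ,t) - (I_d ⊗ θᵀ) Rᵀ ∇_θ Ξ(θ,t)`. Then
`z₂(t) := ∇²_θ Ξ(0,t)` satisfies
`z₂'(t) = (Λ ⊗ I_{L²}) ∇²B(0) π(t)
  + ((Qᵀ ⊗ I_{L²}) - ((K_{d,L} ⊗ I_L) K_{L,dL} + I_{dL²})(Rᵀ ⊗ I_L)) z₂(t)
  + (((Λ ⊗ I_L) ∇B(0)) ⊗ I_L) z₁(t)
  + (K_{d,L} ⊗ I_L) K_{L,dL} (((Λ ⊗ I_L) ∇B(0)) ⊗ I_L) z₁(t)`. -/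
theorem second_moment_ode {d L : ℕ}
    (Q : Matrix (Fin d) (Fin d) ℝ)
    (hQoff : ∀ i j, i ≠ j → 0 ≤ Q i j) (hQrow : ∀ i, ∑ j, Q i j = 0)
    (lam : Fin d → ℝ) (hlam : ∀ j, 0 ≤ lam j)
    (β : Fin d → (Fin L → ℝ) → ℝ)
    (hβ : ∀ j, ContDiff ℝ 3 (β j)) (hβ0 : ∀ j, β j 0 = 1)
    (Λ : Matrix (Fin d) (Fin d) ℝ) (hΛ : Λ = Matrix.diagonal lam)
    (Bm : (Fin L → ℝ) → Matrix (Fin d) (Fin d) ℝ)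
    (hBm : Bm = fun θ => Matrix.diagonal fun j => β j θ)
    (Rb : Fin d → Matrix (Fin L) (Fin L) ℝ)
    (R : Matrix (Fin d × Fin L) (Fin d × Fin L) ℝ)
    (hR : R = Matrix.of fun p q => if p.1 = q.1 then Rb p.1 p.2 q.2 else 0)
    (Ξ : (Fin L → ℝ) → ℝ → Fin d → ℝ)
    (hΞ : ContDiff ℝ 3 fun p : (Fin L → ℝ) × ℝ => Ξ p.1 p.2)
    (gradΞ : (Fin L → ℝ) → ℝ → Fin d × Fin L → ℝ)
    (hgradΞ : gradΞ = fun θ s p => fderiv ℝ (fun x => Ξ x s p.1) θ (Pi.single p.2 1))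
    (hPDE : ∀ θ : Fin L → ℝ, ∀ s ∈ Set.Ici (0 : ℝ),
      HasDerivWithinAt (fun u => Ξ θ u)
        ((Λ * (Bm θ - 1)) *ᵥ Ξ θ s + Qᵀ *ᵥ Ξ θ s
          - idKronRowVec d θ *ᵥ (Rᵀ *ᵥ gradΞ θ s))
        (Set.Ici 0) s)
    (z₁ : ℝ → Fin d × Fin L → ℝ) (hz₁ : z₁ = fun s => gradΞ 0 s)
    (z₂ : ℝ → (Fin d × Fin L) × Fin L → ℝ)
    (hz₂ : z₂ = fun s p =>
      fderiv ℝ (fun θ => fderiv ℝ (fun x => Ξ x s p.1.1) θ (Pi.single p.1.2 1)) 0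
        (Pi.single p.2 1))
    -- `(K_{d,L} ⊗ I_L) K_{L,dL}` (with the canonical associativity identification of the
    -- row index of `K_{L,dL}`)
    (KK : Matrix ((Fin d × Fin L) × Fin L) ((Fin d × Fin L) × Fin L) ℝ)
    (hKK : KK = (commMat (Fin d) (Fin L) ⊗ₖ (1 : Matrix (Fin L) (Fin L) ℝ))
      * (Matrix.reindex (Equiv.prodAssoc (Fin L) (Fin d) (Fin L)).symm (Equiv.refl _)
          (commMat (Fin L) (Fin d × Fin L)))) :
    ∀ s ∈ Set.Ici (0 : ℝ),
      HasDerivWithinAt z₂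
        ((((Λ ⊗ₖ (1 : Matrix (Fin L) (Fin L) ℝ)) ⊗ₖ (1 : Matrix (Fin L) (Fin L) ℝ))
            * mgrad (fun θ => mgrad Bm θ) 0) *ᵥ Ξ 0 s
          + (((Qᵀ ⊗ₖ (1 : Matrix (Fin L) (Fin L) ℝ)) ⊗ₖ (1 : Matrix (Fin L) (Fin L) ℝ))
              - (KK + 1) * (Rᵀ ⊗ₖ (1 : Matrix (Fin L) (Fin L) ℝ))) *ᵥ z₂ s
          + ((((Λ ⊗ₖ (1 : Matrix (Fin L) (Fin L) ℝ)) * mgrad Bm 0)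
              ⊗ₖ (1 : Matrix (Fin L) (Fin L) ℝ)) *ᵥ z₁ s)
          + ((KK * (((Λ ⊗ₖ (1 : Matrix (Fin L) (Fin L) ℝ)) * mgrad Bm 0)
              ⊗ₖ (1 : Matrix (Fin L) (Fin L) ℝ))) *ᵥ z₁ s))
        (Set.Ici 0) s := by
  intro s hs
  classical
  set u : Fin d → ((Fin L → ℝ) × ℝ) → ℝ := fun i p => Ξ p.1 p.2 i with hudef
  set a : Fin L → ((Fin L → ℝ) × ℝ) := fun k => (Pi.single k 1, (0:ℝ)) with hadef
  set τ : ((Fin L → ℝ) × ℝ) := (0, 1) with hτdef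
  have hu3 : ∀ i, ContDiff ℝ ((2:ℕ)+1) (u i) := by
    intro i
    have := contDiff_pi.mp hΞ i
    exact_mod_cast this
  have hu2 : ∀ i, ContDiff ℝ 2 (u i) := fun i =>
    (hu3 i).of_le (by exact_mod_cast (by omega : (2:ℕ) ≤ 2 + 1))
  have hudiff : ∀ i, Differentiable ℝ (u i) := fun i => (hu2 i).differentiable (by norm_num)
  have hv2 : ∀ i k, ContDiff ℝ ((1:ℕ)+1) (dirD (a k) (u i)) := fun i k => by
    exact_mod_cast contDiff_dirD (n := 2) _ (hu3 i)
  have hv2' : ∀ i k, ContDiff ℝ 2 (dirD (a k) (u i)) := fun i k => by exact_mod_cast hv2 i k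
  have hvdiff : ∀ i k, Differentiable ℝ (dirD (a k) (u i)) := fun i k =>
    (hv2' i k).differentiable (by norm_num)
  have hw1 : ∀ i k k', ContDiff ℝ (1:ℕ) (dirD (a k') (dirD (a k) (u i))) := fun i k k' =>
    contDiff_dirD _ (hv2 i k)
  have hwdiff : ∀ i k k', Differentiable ℝ (dirD (a k') (dirD (a k) (u i))) := fun i k k' =>
    (hw1 i k k').differentiable (by norm_num)
  have hT2 : ∀ i, ContDiff ℝ ((1:ℕ)+1) (dirD τ (u i)) := fun i => by
    exact_mod_cast contDiff_dirD (n := 2) _ (hu3 i)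
  have hT2' : ∀ i, ContDiff ℝ 2 (dirD τ (u i)) := fun i => by exact_mod_cast hT2 i
  have hTdiff : ∀ i, Differentiable ℝ (dirD τ (u i)) := fun i =>
    (hT2' i).differentiable (by norm_num)
  have hTv : ∀ i k, Differentiable ℝ (dirD (a k) (dirD τ (u i))) := fun i k =>
    (contDiff_dirD (n := 1) _ (hT2 i)).differentiable (by norm_num)
  -- z₁, z₂ expressed through dirD
  have hz1e : ∀ (t : ℝ) (i : Fin d) (k : Fin L), z₁ t (i,k) = dirD (a k) (u i) (0,t) := by
    intro t i k
    rw [hz₁, hgradΞ]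
    exact sect_fderiv (hudiff i _) _
  have hgrad' : ∀ (θ : Fin L → ℝ) (t : ℝ) (i : Fin d) (k : Fin L),
      gradΞ θ t (i,k) = dirD (a k) (u i) (θ,t) := by
    intro θ t i k
    rw [hgradΞ]
    exact sect_fderiv (hudiff i _) _
  have hz2e : ∀ (t : ℝ) (i : Fin d) (k l : Fin L),
      z₂ t ((i,k),l) = dirD (a l) (dirD (a k) (u i)) (0,t) := by
    intro t i k l
    rw [hz₂]
    have hinner : (fun θ => fderiv ℝ (fun x => Ξ x t i) θ (Pi.single k 1))
        = fun θ => dirD (a k) (u i) (θ, t) := funext fun θ => sect_fderiv (hudiff i _) _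
    show fderiv ℝ (fun θ => fderiv ℝ (fun x => Ξ x t i) θ (Pi.single k 1)) 0 (Pi.single l 1) = _
    rw [hinner]
    exact sect_fderiv (hvdiff i k _) _
  -- the PDE right-hand side as an explicit function on the product space
  set Gf : Fin d → ((Fin L → ℝ) × ℝ) → ℝ := fun i p =>
    lam i * ((β i p.1 - 1) * u i p) + (∑ i', Q i' i * u i' p)
      - ∑ m, p.1 m * (∑ k', Rb i k' m * dirD (a k') (u i) p) with hGfdef
  have hb3 : ∀ i, ContDiff ℝ ((2:ℕ)+1) (fun p : (Fin L → ℝ) × ℝ => β i p.1) := fun i => by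
    exact_mod_cast ((hβ i).comp contDiff_fst : ContDiff ℝ 3 fun p : (Fin L → ℝ) × ℝ => β i p.1)
  have hb2 : ∀ i, ContDiff ℝ 2 (fun p : (Fin L → ℝ) × ℝ => β i p.1) := fun i => by
    exact_mod_cast ((hb3 i).of_le (by exact_mod_cast (by omega : (2:ℕ) ≤ 2 + 1)))
  have hbdiff : ∀ i, Differentiable ℝ (fun p : (Fin L → ℝ) × ℝ => β i p.1) := fun i =>
    (hb2 i).differentiable (by norm_num)
  have hbk2 : ∀ i k, ContDiff ℝ 2 (dirD (a k) (fun p : (Fin L → ℝ) × ℝ => β i p.1)) :=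
    fun i k => by exact_mod_cast contDiff_dirD (n := 2) _ (hb3 i)
  have hbkdiff : ∀ i k, Differentiable ℝ (dirD (a k) (fun p : (Fin L → ℝ) × ℝ => β i p.1)) :=
    fun i k => (hbk2 i k).differentiable (by norm_num)
  have hcoord : ∀ m : Fin L, ContDiff ℝ ((1:ℕ)+1) (fun p : (Fin L → ℝ) × ℝ => p.1 m) := by
    intro m
    have h : (fun p : (Fin L → ℝ) × ℝ => p.1 m) =
        ⇑((ContinuousLinearMap.proj (R := ℝ) (φ := fun _ : Fin L => ℝ) m).comp
          (ContinuousLinearMap.fst ℝ (Fin L → ℝ) ℝ)) := rfl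
    rw [h]; exact ContinuousLinearMap.contDiff _
  have hGf2 : ∀ i, ContDiff ℝ ((1:ℕ)+1) (Gf i) := by
    intro i
    apply ContDiff.sub
    · apply ContDiff.add
      · exact contDiff_const.mul
          ((((hb3 i).of_le (by exact_mod_cast (by omega : (2:ℕ) ≤ 2 + 1))).sub
            contDiff_const).mul
            ((hu3 i).of_le (by exact_mod_cast (by omega : (2:ℕ) ≤ 2 + 1))))
      · exact ContDiff.sum fun i' _ => contDiff_const.mul
          ((hu3 i').of_le (by exact_mod_cast (by omega : (2:ℕ) ≤ 2 + 1)))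
    · exact ContDiff.sum fun m _ => (hcoord m).mul
        (ContDiff.sum fun k' _ => contDiff_const.mul (hv2 i k'))
  have hGfdiff : ∀ i, Differentiable ℝ (Gf i) := fun i =>
    (hGf2 i).differentiable (by norm_num)
  have hGfd2 : ∀ i k, Differentiable ℝ (dirD (a k) (Gf i)) := fun i k =>
    (contDiff_dirD (n := 1) _ (hGf2 i)).differentiable (by norm_num)
  -- the PDE, componentwise, as an identity of functions for t ≥ 0
  have hVcomp : ∀ (θ : Fin L → ℝ) (t : ℝ) (i : Fin d),
      (((Λ * (Bm θ - 1)) *ᵥ Ξ θ t + Qᵀ *ᵥ Ξ θ t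
        - idKronRowVec d θ *ᵥ (Rᵀ *ᵥ gradΞ θ t) : Fin d → ℝ)) i = Gf i (θ, t) := by
    intro θ t i
    have h1 : ((Λ * (Bm θ - 1)) *ᵥ Ξ θ t) i = lam i * ((β i θ - 1) * Ξ θ t i) := by
      rw [hΛ, hBm]
      have hd : (Matrix.diagonal fun j => β j θ) - 1
          = Matrix.diagonal (fun j => β j θ - 1) := by
        rw [← Matrix.diagonal_one, Matrix.diagonal_sub]
      rw [hd, Matrix.diagonal_mul_diagonal]
      rw [Matrix.mulVec_diagonal]
      ring
    have h2 : (Qᵀ *ᵥ Ξ θ t) i = ∑ i', Q i' i * Ξ θ t i' := by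
      simp [Matrix.mulVec, dotProduct, Matrix.transpose_apply]
    have hinner : ∀ (b : Fin d) (m : Fin L),
        (Rᵀ *ᵥ gradΞ θ t) (b, m) = ∑ k', Rb b k' m * gradΞ θ t (b, k') := by
      intro b m
      rw [hR]
      simp only [Matrix.mulVec, dotProduct, Matrix.transpose_apply, Matrix.of_apply]
      rw [Fintype.sum_prod_type]
      rw [Finset.sum_eq_single b (fun x _ hx => by simp [hx] ) (by simp)]
      simp
    have houter : ∀ y : Fin d × Fin L → ℝ, (idKronRowVec d θ *ᵥ y) i = ∑ m, θ m * y (i, m) := by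
      intro y
      simp only [Matrix.mulVec, dotProduct, idKronRowVec, Matrix.of_apply]
      rw [Fintype.sum_prod_type]
      rw [Finset.sum_eq_single i (fun x _ hx => by simp [Ne.symm hx]) (by simp)]
      simp
    have h3 : (idKronRowVec d θ *ᵥ (Rᵀ *ᵥ gradΞ θ t)) i
        = ∑ m, θ m * (∑ k', Rb i k' m * dirD (a k') (u i) (θ, t)) := by
      rw [houter]
      refine Finset.sum_congr rfl fun m _ => ?_
      rw [hinner i m]
      simp only [hgrad']
    simp only [Pi.add_apply, Pi.sub_apply, h1, h2, h3, hGfdef]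
    rfl
  have hTG : ∀ (i : Fin d) (θ : Fin L → ℝ), ∀ t ∈ Set.Ici (0:ℝ),
      dirD τ (u i) (θ, t) = Gf i (θ, t) := by
    intro i θ t ht
    have h1 : HasDerivWithinAt (fun r => Ξ θ r i)
        ((((Λ * (Bm θ - 1)) *ᵥ Ξ θ t + Qᵀ *ᵥ Ξ θ t
          - idKronRowVec d θ *ᵥ (Rᵀ *ᵥ gradΞ θ t) : Fin d → ℝ)) i) (Set.Ici 0) t :=
      hasDerivWithinAt_pi.mp (hPDE θ t ht) i
    have h2 : HasDerivWithinAt (fun r => Ξ θ r i) (dirD τ (u i) (θ,t)) (Set.Ici 0) t :=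
      (time_hasDerivAt (hudiff i _)).hasDerivWithinAt
    have hUD := uniqueDiffOn_Ici (0:ℝ) t ht
    have e1 := h1.derivWithin hUD
    have e2 := h2.derivWithin hUD
    rw [← e2, e1, hVcomp]
  -- convenient conversion between partial and joint derivatives
  have hsect : ∀ (f : (Fin L → ℝ) × ℝ → ℝ) (t : ℝ) (θ : Fin L → ℝ) (k : Fin L),
      DifferentiableAt ℝ f (θ, t) →
      fderiv ℝ (fun x => f (x, t)) θ (Pi.single k 1) = dirD (a k) f (θ, t) := by
    intro f t θ k hf
    exact sect_fderiv hf _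
  set dβ : Fin d → Fin L → ℝ := fun j k => fderiv ℝ (β j) 0 (Pi.single k 1) with hdβdef
  set ddβ : Fin d → Fin L → Fin L → ℝ := fun j k l =>
    fderiv ℝ (fun x => fderiv ℝ (β j) x (Pi.single k 1)) 0 (Pi.single l 1) with hddβdef
  have hbk_val : ∀ (j : Fin d) (kk : Fin L) (θ : Fin L → ℝ) (t : ℝ),
      dirD (a kk) (fun q : (Fin L → ℝ) × ℝ => β j q.1) (θ, t)
        = fderiv ℝ (β j) θ (Pi.single kk 1) := by
    intro j kk θ t
    rw [← hsect _ t θ kk (hbdiff j _)]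
  have hddβ_val : ∀ (j : Fin d) (k l : Fin L) (t : ℝ),
      dirD (a l) (dirD (a k) (fun q : (Fin L → ℝ) × ℝ => β j q.1)) (0, t) = ddβ j k l := by
    intro j k l t
    rw [← hsect _ t 0 l (hbkdiff j k _)]
    have h : (fun x => dirD (a k) (fun q : (Fin L → ℝ) × ℝ => β j q.1) (x, t))
        = fun x => fderiv ℝ (β j) x (Pi.single k 1) := funext fun x => hbk_val j k x t
    rw [h, hddβdef]
  have main : ∀ (j : Fin d) (k l : Fin L),
      HasDerivWithinAt (fun t => z₂ t ((j,k),l))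
        (lam j * (ddβ j k l * Ξ 0 s j + dβ j k * z₁ s (j,l)) + lam j * (dβ j l * z₁ s (j,k))
          + ((∑ i', Q i' j * z₂ s ((i',k),l)) - (∑ k', Rb j k' k * z₂ s ((j,k'),l))
          - (∑ k', Rb j k' l * z₂ s ((j,k'),k)))) (Set.Ici 0) s := by
    intro j k l
    have hfun : (fun t => z₂ t ((j,k),l)) = fun t => dirD (a l) (dirD (a k) (u j)) (0, t) :=
      funext fun t => hz2e t j k l
    rw [hfun]
    have hder : HasDerivWithinAt (fun t => dirD (a l) (dirD (a k) (u j)) (0, t))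
        (dirD τ (dirD (a l) (dirD (a k) (u j))) (0, s)) (Set.Ici 0) s :=
      (time_hasDerivAt (hwdiff j k l _)).hasDerivWithinAt
    have hval : dirD τ (dirD (a l) (dirD (a k) (u j))) (0, s)
        = lam j * (ddβ j k l * Ξ 0 s j + dβ j k * z₁ s (j,l)) + lam j * (dβ j l * z₁ s (j,k))
          + ((∑ i', Q i' j * z₂ s ((i',k),l)) - (∑ k', Rb j k' k * z₂ s ((j,k'),l))
          - (∑ k', Rb j k' l * z₂ s ((j,k'),k))) := by
      rw [dirD_comm (hv2' j k) τ (a l)]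
      rw [dirD_comm (hu2 j) τ (a k)]
      -- now : dirD (a l) (dirD (a k) (dirD τ (u j))) (0, s)
      have e1 : (fun θ => dirD (a k) (dirD τ (u j)) (θ, s))
          = fun θ => dirD (a k) (Gf j) (θ, s) := by
        funext θ
        rw [← hsect _ s θ k (hTdiff j _), ← hsect _ s θ k (hGfdiff j _)]
        have e0 : (fun x => dirD τ (u j) (x, s)) = fun x => Gf j (x, s) :=
          funext fun x => hTG j x s hs
        rw [e0]
      have e2 : dirD (a l) (dirD (a k) (dirD τ (u j))) (0, s)
          = dirD (a l) (dirD (a k) (Gf j)) (0, s) := by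
        rw [← hsect _ s 0 l (hTv j k _), ← hsect _ s 0 l (hGfd2 j k _)]
        rw [e1]
      rw [e2]
      -- stage 1 : first θ-derivative of the PDE right-hand side, as a function
      have hcoorddiff : ∀ m : Fin L, Differentiable ℝ (fun p : (Fin L → ℝ) × ℝ => p.1 m) :=
        fun m => ((hcoord m).differentiable (by norm_num))
      have stage1 : dirD (a k) (Gf j) = fun p =>
          lam j * (dirD (a k) (fun q : (Fin L → ℝ) × ℝ => β j q.1) p * u j p
            + (β j p.1 - 1) * dirD (a k) (u j) p)
          + (∑ i', Q i' j * dirD (a k) (u i') p)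
          - ∑ m, ((Pi.single k 1 : Fin L → ℝ) m * (∑ k', Rb j k' m * dirD (a k') (u j) p)
              + p.1 m * (∑ k', Rb j k' m * dirD (a k) (dirD (a k') (u j)) p)) := by
        funext p
        have hd1 : DifferentiableAt ℝ
            (fun p : (Fin L → ℝ) × ℝ => lam j * ((β j p.1 - 1) * u j p)) p :=
          ((((hbdiff j p).sub_const 1).mul (hudiff j p)).const_mul (lam j))
        have hd2 : DifferentiableAt ℝ
            (fun p : (Fin L → ℝ) × ℝ => ∑ i', Q i' j * u i' p) p :=
          DifferentiableAt.fun_sum fun i' _ => (hudiff i' p).const_mul _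
        have hSd : ∀ m : Fin L, DifferentiableAt ℝ
            (fun p : (Fin L → ℝ) × ℝ => ∑ k', Rb j k' m * dirD (a k') (u j) p) p :=
          fun m => DifferentiableAt.fun_sum fun k' _ => (hvdiff j k' p).const_mul _
        have hd3 : DifferentiableAt ℝ
            (fun p : (Fin L → ℝ) × ℝ =>
              ∑ m, p.1 m * (∑ k', Rb j k' m * dirD (a k') (u j) p)) p :=
          DifferentiableAt.fun_sum fun m _ => (hcoorddiff m p).mul (hSd m)
        have c1 : dirD (a k) (fun p : (Fin L → ℝ) × ℝ => lam j * ((β j p.1 - 1) * u j p)) p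
            = lam j * (dirD (a k) (fun q : (Fin L → ℝ) × ℝ => β j q.1) p * u j p
              + (β j p.1 - 1) * dirD (a k) (u j) p) := by
          rw [dirD_const_mul (a k) (((hbdiff j p).sub_const 1).fun_mul (hudiff j p)) (lam j)]
          rw [dirD_mul (a k) ((hbdiff j p).sub_const 1) (hudiff j p)]
          rw [dirD_sub_const (a k) (1:ℝ)]
        have c2 : dirD (a k) (fun p : (Fin L → ℝ) × ℝ => ∑ i', Q i' j * u i' p) p
            = ∑ i', Q i' j * dirD (a k) (u i') p := by
          rw [dirD_sum (a k) (fun i' _ => (hudiff i' p).const_mul _)]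
          exact Finset.sum_congr rfl fun i' _ => dirD_const_mul (a k) (hudiff i' p) _
        have c3 : dirD (a k)
            (fun p : (Fin L → ℝ) × ℝ =>
              ∑ m, p.1 m * (∑ k', Rb j k' m * dirD (a k') (u j) p)) p
            = ∑ m, ((Pi.single k 1 : Fin L → ℝ) m * (∑ k', Rb j k' m * dirD (a k') (u j) p)
              + p.1 m * (∑ k', Rb j k' m * dirD (a k) (dirD (a k') (u j)) p)) := by
          rw [dirD_sum (a k) (fun m _ => (hcoorddiff m p).fun_mul (hSd m))]
          refine Finset.sum_congr rfl fun m _ => ?_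
          rw [dirD_mul (a k) (hcoorddiff m p) (hSd m)]
          rw [dirD_coord (a k) m p]
          rw [dirD_sum (a k) (fun k' _ => (hvdiff j k' p).const_mul _)]
          have : ∀ k' : Fin L,
              dirD (a k) (fun q => Rb j k' m * dirD (a k') (u j) q) p
                = Rb j k' m * dirD (a k) (dirD (a k') (u j)) p :=
            fun k' => dirD_const_mul (a k) (hvdiff j k' p) _
          simp only [this]
          rfl
        have hGle : Gf j = fun p : (Fin L → ℝ) × ℝ =>
            (fun p : (Fin L → ℝ) × ℝ => lam j * ((β j p.1 - 1) * u j p)) p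
              + (fun p : (Fin L → ℝ) × ℝ => ∑ i', Q i' j * u i' p) p
              - (fun p : (Fin L → ℝ) × ℝ =>
                  ∑ m, p.1 m * (∑ k', Rb j k' m * dirD (a k') (u j) p)) p := rfl
        rw [hGle]
        rw [dirD_sub (a k) (hd1.fun_add hd2) hd3]
        rw [dirD_add (a k) hd1 hd2]
        rw [c1, c2, c3]
      rw [stage1]
      -- stage 2 : second θ-derivative, evaluated at (0, s)
      have hsingle_sum : ∀ (X : Fin L → ℝ) (kk : Fin L),
          ∑ m, (Pi.single kk 1 : Fin L → ℝ) m * X m = X kk := by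
        intro X kk
        rw [Finset.sum_eq_single kk (fun m _ hm => by
          rw [Pi.single_eq_of_ne hm]; ring) (by simp)]
        simp
      set p0 : (Fin L → ℝ) × ℝ := ((0 : Fin L → ℝ), s) with hp0def
      have hS2d : ∀ m : Fin L, DifferentiableAt ℝ
          (fun p : (Fin L → ℝ) × ℝ =>
            ∑ k', Rb j k' m * dirD (a k) (dirD (a k') (u j)) p) p0 :=
        fun m => DifferentiableAt.fun_sum fun k' _ => (hwdiff j k' k p0).const_mul _
      have hSd0 : ∀ m : Fin L, DifferentiableAt ℝ
          (fun p : (Fin L → ℝ) × ℝ => ∑ k', Rb j k' m * dirD (a k') (u j) p) p0 :=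
        fun m => DifferentiableAt.fun_sum fun k' _ => (hvdiff j k' p0).const_mul _
      have hd1a : DifferentiableAt ℝ
          (fun p : (Fin L → ℝ) × ℝ =>
            dirD (a k) (fun q : (Fin L → ℝ) × ℝ => β j q.1) p * u j p) p0 :=
        (hbkdiff j k p0).mul (hudiff j p0)
      have hd1b : DifferentiableAt ℝ
          (fun p : (Fin L → ℝ) × ℝ => (β j p.1 - 1) * dirD (a k) (u j) p) p0 :=
        ((hbdiff j p0).sub_const 1).mul (hvdiff j k p0)
      have hd1 : DifferentiableAt ℝ
          (fun p : (Fin L → ℝ) × ℝ =>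
            lam j * (dirD (a k) (fun q : (Fin L → ℝ) × ℝ => β j q.1) p * u j p
              + (β j p.1 - 1) * dirD (a k) (u j) p)) p0 :=
        (hd1a.add hd1b).const_mul _
      have hd2 : DifferentiableAt ℝ
          (fun p : (Fin L → ℝ) × ℝ => ∑ i', Q i' j * dirD (a k) (u i') p) p0 :=
        DifferentiableAt.fun_sum fun i' _ => (hvdiff i' k p0).const_mul _
      have hd3 : DifferentiableAt ℝ
          (fun p : (Fin L → ℝ) × ℝ =>
            ∑ m, ((Pi.single k 1 : Fin L → ℝ) m * (∑ k', Rb j k' m * dirD (a k') (u j) p)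
              + p.1 m * (∑ k', Rb j k' m * dirD (a k) (dirD (a k') (u j)) p))) p0 :=
        DifferentiableAt.fun_sum fun m _ =>
          ((hSd0 m).const_mul _).add ((hcoorddiff m p0).mul (hS2d m))
      have g1 : dirD (a l)
          (fun p : (Fin L → ℝ) × ℝ =>
            lam j * (dirD (a k) (fun q : (Fin L → ℝ) × ℝ => β j q.1) p * u j p
              + (β j p.1 - 1) * dirD (a k) (u j) p)) p0
          = lam j * ((ddβ j k l * u j p0
              + dβ j k * dirD (a l) (u j) p0)
            + (dβ j l * dirD (a k) (u j) p0)) := by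
        rw [dirD_const_mul (a l) (hd1a.fun_add hd1b) (lam j)]
        rw [dirD_add (a l) hd1a hd1b]
        rw [dirD_mul (a l) (hbkdiff j k p0) (hudiff j p0)]
        rw [dirD_mul (a l) ((hbdiff j p0).sub_const 1) (hvdiff j k p0)]
        rw [dirD_sub_const (a l) (1:ℝ)]
        rw [hddβ_val j k l s]
        have h1 : dirD (a k) (fun q : (Fin L → ℝ) × ℝ => β j q.1) p0 = dβ j k := by
          rw [hp0def, hbk_val j k 0 s, hdβdef]
        have h2 : dirD (a l) (fun q : (Fin L → ℝ) × ℝ => β j q.1) p0 = dβ j l := by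
          rw [hp0def, hbk_val j l 0 s, hdβdef]
        rw [h1, h2]
        have h3 : β j p0.1 - 1 = 0 := by
          rw [hp0def]; simp [hβ0 j]
        rw [h3]
        ring
      have g2 : dirD (a l)
          (fun p : (Fin L → ℝ) × ℝ => ∑ i', Q i' j * dirD (a k) (u i') p) p0
          = ∑ i', Q i' j * dirD (a l) (dirD (a k) (u i')) p0 := by
        rw [dirD_sum (a l) (fun i' _ => (hvdiff i' k p0).const_mul _)]
        exact Finset.sum_congr rfl fun i' _ => dirD_const_mul (a l) (hvdiff i' k p0) _
      have g3 : dirD (a l)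
          (fun p : (Fin L → ℝ) × ℝ =>
            ∑ m, ((Pi.single k 1 : Fin L → ℝ) m * (∑ k', Rb j k' m * dirD (a k') (u j) p)
              + p.1 m * (∑ k', Rb j k' m * dirD (a k) (dirD (a k') (u j)) p))) p0
          = (∑ k', Rb j k' k * dirD (a l) (dirD (a k') (u j)) p0)
            + (∑ k', Rb j k' l * dirD (a k) (dirD (a k') (u j)) p0) := by
        rw [dirD_sum (a l) (fun m _ =>
          ((hSd0 m).const_mul _).fun_add ((hcoorddiff m p0).fun_mul (hS2d m)))]
        have hper : ∀ m : Fin L,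
            dirD (a l) (fun p : (Fin L → ℝ) × ℝ =>
              (Pi.single k 1 : Fin L → ℝ) m * (∑ k', Rb j k' m * dirD (a k') (u j) p)
              + p.1 m * (∑ k', Rb j k' m * dirD (a k) (dirD (a k') (u j)) p)) p0
            = (Pi.single k 1 : Fin L → ℝ) m
                * (∑ k', Rb j k' m * dirD (a l) (dirD (a k') (u j)) p0)
              + (Pi.single l 1 : Fin L → ℝ) m
                * (∑ k', Rb j k' m * dirD (a k) (dirD (a k') (u j)) p0) := by
          intro m
          rw [dirD_add (a l) ((hSd0 m).const_mul _) ((hcoorddiff m p0).fun_mul (hS2d m))]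
          rw [dirD_const_mul (a l) (hSd0 m) _]
          rw [dirD_mul (a l) (hcoorddiff m p0) (hS2d m)]
          rw [dirD_coord (a l) m p0]
          rw [dirD_sum (a l) (fun k' _ => (hvdiff j k' p0).const_mul _)]
          have hc : ∀ k' : Fin L,
              dirD (a l) (fun q => Rb j k' m * dirD (a k') (u j) q) p0
                = Rb j k' m * dirD (a l) (dirD (a k') (u j)) p0 :=
            fun k' => dirD_const_mul (a l) (hvdiff j k' p0) _
          simp only [hc]
          simp [hp0def, hadef]
        simp only [hper]
        rw [Finset.sum_add_distrib]
        rw [hsingle_sum (fun m => ∑ k', Rb j k' m * dirD (a l) (dirD (a k') (u j)) p0) k]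
        rw [hsingle_sum (fun m => ∑ k', Rb j k' m * dirD (a k) (dirD (a k') (u j)) p0) l]
      have gsplit : dirD (a l)
          (fun p : (Fin L → ℝ) × ℝ =>
            lam j * (dirD (a k) (fun q : (Fin L → ℝ) × ℝ => β j q.1) p * u j p
              + (β j p.1 - 1) * dirD (a k) (u j) p)
            + (∑ i', Q i' j * dirD (a k) (u i') p)
            - ∑ m, ((Pi.single k 1 : Fin L → ℝ) m * (∑ k', Rb j k' m * dirD (a k') (u j) p)
              + p.1 m * (∑ k', Rb j k' m * dirD (a k) (dirD (a k') (u j)) p))) p0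
          = dirD (a l)
            (fun p : (Fin L → ℝ) × ℝ =>
              lam j * (dirD (a k) (fun q : (Fin L → ℝ) × ℝ => β j q.1) p * u j p
                + (β j p.1 - 1) * dirD (a k) (u j) p)) p0
            + dirD (a l)
              (fun p : (Fin L → ℝ) × ℝ => ∑ i', Q i' j * dirD (a k) (u i') p) p0
            - dirD (a l)
              (fun p : (Fin L → ℝ) × ℝ =>
                ∑ m, ((Pi.single k 1 : Fin L → ℝ) m
                    * (∑ k', Rb j k' m * dirD (a k') (u j) p)
                  + p.1 m * (∑ k', Rb j k' m * dirD (a k) (dirD (a k') (u j)) p))) p0 := by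
        rw [dirD_sub (a l) (hd1.fun_add hd2) hd3, dirD_add (a l) hd1 hd2]
      rw [gsplit, g1, g2, g3]
      have hz2v : ∀ (i : Fin d) (kk ll : Fin L),
          dirD (a ll) (dirD (a kk) (u i)) p0 = z₂ s ((i,kk),ll) := fun i kk ll =>
        (hz2e s i kk ll).symm
      have hz1v : ∀ (i : Fin d) (kk : Fin L),
          dirD (a kk) (u i) p0 = z₁ s (i,kk) := fun i kk => (hz1e s i kk).symm
      have huv : u j p0 = Ξ 0 s j := rfl
      simp only [hz2v, hz1v, huv]
      ring

    rw [hval] at hder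
    exact hder
  -- entries of the matrices appearing on the right-hand side
  have hmB : ∀ (θ : Fin L → ℝ) (i : Fin d) (kk : Fin L) (j' : Fin d),
      mgrad Bm θ (i,kk) j' = if i = j' then fderiv ℝ (β i) θ (Pi.single kk 1) else 0 := by
    intro θ i kk j'
    show fderiv ℝ (fun x => Bm x i j') θ (Pi.single kk 1) = _
    by_cases h : i = j'
    · subst h
      have hfe : (fun x => Bm x i i) = fun x => β i x := funext fun x => by
        rw [hBm]; exact Matrix.diagonal_apply_eq _ _
      rw [hfe, if_pos rfl]
    · have hfe : (fun x => Bm x i j') = fun _ => (0:ℝ) := funext fun x => by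
        rw [hBm]; exact Matrix.diagonal_apply_ne _ h
      rw [hfe, if_neg h]
      simp
  have hmmB : ∀ (i : Fin d) (kk ll : Fin L) (j' : Fin d),
      mgrad (fun θ => mgrad Bm θ) 0 ((i,kk),ll) j' = if i = j' then ddβ i kk ll else 0 := by
    intro i kk ll j'
    show fderiv ℝ (fun x => mgrad Bm x (i,kk) j') 0 (Pi.single ll 1) = _
    by_cases h : i = j'
    · subst h
      have hfe : (fun x => mgrad Bm x (i,kk) i)
          = fun x => fderiv ℝ (β i) x (Pi.single kk 1) :=
        funext fun x => by rw [hmB x i kk i, if_pos rfl]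
      rw [hfe, if_pos rfl, hddβdef]
    · have hfe : (fun x => mgrad Bm x (i,kk) j') = fun _ => (0:ℝ) :=
        funext fun x => by rw [hmB x i kk j', if_neg h]
      rw [hfe, if_neg h]
      simp
  refine hasDerivWithinAt_pi.mpr ?_
  rintro ⟨⟨j, k⟩, l⟩
  have hT1 : ((((Λ ⊗ₖ (1 : Matrix (Fin L) (Fin L) ℝ)) ⊗ₖ (1 : Matrix (Fin L) (Fin L) ℝ))
      * mgrad (fun θ => mgrad Bm θ) 0) *ᵥ Ξ 0 s) ((j,k),l)
      = lam j * (ddβ j k l * Ξ 0 s j) := by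
    rw [← Matrix.mulVec_mulVec, kron1_mulVec]
    have hy : ∀ c : Fin d × Fin L,
        (mgrad (fun θ => mgrad Bm θ) 0 *ᵥ Ξ 0 s) (c, l) = ddβ c.1 c.2 l * Ξ 0 s c.1 := by
      intro c
      simp only [Matrix.mulVec, dotProduct]
      rw [Finset.sum_eq_single c.1 (fun i' _ hi' => by rw [hmmB, if_neg (Ne.symm hi')]; ring)
        (by simp)]
      rw [hmmB, if_pos rfl]
    simp only [hy]
    rw [Fintype.sum_prod_type]
    rw [Finset.sum_eq_single j (fun i' _ hi' => by
      apply Finset.sum_eq_zero; intro kk _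
      rw [Matrix.kroneckerMap_apply, hΛ, Matrix.diagonal_apply_ne _ (Ne.symm hi')]
      ring) (by simp)]
    rw [Finset.sum_eq_single k (fun kk _ hkk => by
      rw [Matrix.kroneckerMap_apply, Matrix.one_apply_ne (Ne.symm hkk)]
      ring) (by simp)]
    rw [Matrix.kroneckerMap_apply, Matrix.one_apply_eq, hΛ, Matrix.diagonal_apply_eq]
    ring
  have hT2a : ((((Qᵀ ⊗ₖ (1 : Matrix (Fin L) (Fin L) ℝ)) ⊗ₖ (1 : Matrix (Fin L) (Fin L) ℝ)))
      *ᵥ z₂ s) ((j,k),l) = ∑ i', Q i' j * z₂ s ((i',k),l) := by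
    rw [kron1_mulVec]
    rw [Fintype.sum_prod_type]
    rw [Finset.sum_congr rfl fun i' (_ : i' ∈ Finset.univ) =>
      Finset.sum_eq_single k (fun kk _ hkk => by
        rw [Matrix.kroneckerMap_apply, Matrix.one_apply_ne (Ne.symm hkk)]; ring) (by simp)]
    refine Finset.sum_congr rfl fun i' _ => ?_
    rw [Matrix.kroneckerMap_apply, Matrix.one_apply_eq, Matrix.transpose_apply]
    ring
  have hT2b : ∀ (kk ll : Fin L), (((Rᵀ ⊗ₖ (1 : Matrix (Fin L) (Fin L) ℝ)))
      *ᵥ z₂ s) ((j,kk),ll) = ∑ k', Rb j k' kk * z₂ s ((j,k'),ll) := by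
    intro kk ll
    rw [kron1_mulVec]
    rw [Fintype.sum_prod_type]
    rw [Finset.sum_eq_single j (fun j' _ hj' => by
      apply Finset.sum_eq_zero; intro k' _
      rw [Matrix.transpose_apply, hR]
      simp only [Matrix.of_apply]
      rw [if_neg hj']
      ring) (by simp)]
    refine Finset.sum_congr rfl fun k' _ => ?_
    rw [Matrix.transpose_apply, hR]
    simp
  have hKKv : ∀ (x : (Fin d × Fin L) × Fin L → ℝ) (kk ll : Fin L),
      (KK *ᵥ x) ((j,kk),ll) = x ((j,ll),kk) := by
    intro x kk ll
    rw [hKK]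
    simp only [Matrix.mulVec, dotProduct]
    rw [Finset.sum_eq_single ((j,ll),kk) (fun y _ hy => by
      obtain ⟨⟨p₁, p₂⟩, q⟩ := y
      rw [KK_apply]
      have hne : ¬(j = p₁ ∧ ll = p₂ ∧ kk = q) := by
        intro ⟨h1, h2, h3⟩; exact hy (by rw [h1, h2, h3])
      rw [if_neg hne]; ring) (by simp)]
    rw [KK_apply, if_pos ⟨rfl, rfl, rfl⟩]
    ring
  have hLmB : ∀ (i : Fin d) (kk : Fin L),
      ((Λ ⊗ₖ (1 : Matrix (Fin L) (Fin L) ℝ)) * mgrad Bm 0) ((j,kk)) i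
        = if j = i then lam j * dβ j kk else 0 := by
    intro i kk
    rw [Matrix.mul_apply]
    rw [Fintype.sum_prod_type]
    rw [Finset.sum_eq_single j (fun b _ hb => by
      apply Finset.sum_eq_zero; intro c _
      rw [Matrix.kroneckerMap_apply, hΛ, Matrix.diagonal_apply_ne _ (Ne.symm hb)]
      ring) (by simp)]
    rw [Finset.sum_eq_single kk (fun c _ hc => by
      rw [Matrix.kroneckerMap_apply, Matrix.one_apply_ne (Ne.symm hc)]
      ring) (by simp)]
    rw [Matrix.kroneckerMap_apply, Matrix.one_apply_eq, hΛ, Matrix.diagonal_apply_eq, hmB]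
    by_cases h : j = i
    · rw [if_pos h, if_pos h, hdβdef]
      ring
    · rw [if_neg h, if_neg h]
      ring
  have hT3 : ∀ (kk ll : Fin L), (((((Λ ⊗ₖ (1 : Matrix (Fin L) (Fin L) ℝ)) * mgrad Bm 0)
      ⊗ₖ (1 : Matrix (Fin L) (Fin L) ℝ))) *ᵥ z₁ s) ((j,kk),ll)
      = lam j * (dβ j kk * z₁ s (j,ll)) := by
    intro kk ll
    rw [kron1_mulVec]
    rw [Finset.sum_eq_single j (fun i' _ hi' => by
      rw [hLmB i' kk, if_neg (Ne.symm hi')]; ring) (by simp)]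
    rw [hLmB j kk, if_pos rfl]
    ring
  have goalrw :
      (((((Λ ⊗ₖ (1 : Matrix (Fin L) (Fin L) ℝ)) ⊗ₖ (1 : Matrix (Fin L) (Fin L) ℝ))
            * mgrad (fun θ => mgrad Bm θ) 0) *ᵥ Ξ 0 s
          + (((Qᵀ ⊗ₖ (1 : Matrix (Fin L) (Fin L) ℝ)) ⊗ₖ (1 : Matrix (Fin L) (Fin L) ℝ))
              - (KK + 1) * (Rᵀ ⊗ₖ (1 : Matrix (Fin L) (Fin L) ℝ))) *ᵥ z₂ s
          + ((((Λ ⊗ₖ (1 : Matrix (Fin L) (Fin L) ℝ)) * mgrad Bm 0)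
              ⊗ₖ (1 : Matrix (Fin L) (Fin L) ℝ)) *ᵥ z₁ s)
          + ((KK * (((Λ ⊗ₖ (1 : Matrix (Fin L) (Fin L) ℝ)) * mgrad Bm 0)
              ⊗ₖ (1 : Matrix (Fin L) (Fin L) ℝ))) *ᵥ z₁ s)
          : (Fin d × Fin L) × Fin L → ℝ) ((j,k),l))
      = lam j * (ddβ j k l * Ξ 0 s j + dβ j k * z₁ s (j,l)) + lam j * (dβ j l * z₁ s (j,k))
        + ((∑ i', Q i' j * z₂ s ((i',k),l)) - (∑ k', Rb j k' k * z₂ s ((j,k'),l))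
        - (∑ k', Rb j k' l * z₂ s ((j,k'),k))) := by
    have hsplit2 : ((((Qᵀ ⊗ₖ (1 : Matrix (Fin L) (Fin L) ℝ)) ⊗ₖ (1 : Matrix (Fin L) (Fin L) ℝ))
        - (KK + 1) * (Rᵀ ⊗ₖ (1 : Matrix (Fin L) (Fin L) ℝ))) *ᵥ z₂ s) ((j,k),l)
        = (∑ i', Q i' j * z₂ s ((i',k),l)) - ((∑ k', Rb j k' l * z₂ s ((j,k'),k))
          + (∑ k', Rb j k' k * z₂ s ((j,k'),l))) := by
      rw [Matrix.sub_mulVec]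
      have h1 : ((KK + 1) * (Rᵀ ⊗ₖ (1 : Matrix (Fin L) (Fin L) ℝ))) *ᵥ z₂ s
          = KK *ᵥ ((Rᵀ ⊗ₖ (1 : Matrix (Fin L) (Fin L) ℝ)) *ᵥ z₂ s)
            + (Rᵀ ⊗ₖ (1 : Matrix (Fin L) (Fin L) ℝ)) *ᵥ z₂ s := by
        rw [← Matrix.mulVec_mulVec]
        rw [Matrix.add_mulVec, Matrix.one_mulVec]
      rw [h1]
      simp only [Pi.sub_apply, Pi.add_apply]
      rw [hT2a, hKKv _ k l, hT2b l k, hT2b k l]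
    have hlast : ((KK * (((Λ ⊗ₖ (1 : Matrix (Fin L) (Fin L) ℝ)) * mgrad Bm 0)
        ⊗ₖ (1 : Matrix (Fin L) (Fin L) ℝ))) *ᵥ z₁ s) ((j,k),l)
        = lam j * (dβ j l * z₁ s (j,k)) := by
      rw [← Matrix.mulVec_mulVec, hKKv _ k l, hT3 l k]
    simp only [Pi.add_apply]
    rw [hT1, hsplit2, hT3 k l, hlast]
    ring
  have hmain := main j k l
  rw [← goalrw] at hmain
  exact hmain


end
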